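/- The number of multi-Catalan tableaux of size n whose diagonal word contains zero x's is the Catalan number C_{n+1} = (1/(n+2)) * binomial(2n+2, n+1). -/

import Mathlib

inductive MSym : Type
  | a | b | x
deriving DecidableEq

inductive Letter : Type
  | D | E | A
deriving DecidableEq

/-- The content of the diagonal box of row `i` in a staircase filling of size `n`
(boxes `(i, j)` with `i + j < n`; the diagonal box of row `i` is `(i, n-1-i)`). -/
def diagRow (n : ℕ) (F : Fin n → Fin n → Option MSym) (i : Fin n) : Option MSym :=
  F i ⟨n - 1 - (i : ℕ), by have := i.isLt; omega⟩

def diagCol (n : ℕ) (F : Fin n → Fin n → Option MSym) (j : Fin n) : Option MSym :=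
  F ⟨n - 1 - (j : ℕ), by have := j.isLt; omega⟩ j

/-- A box is forced to be empty if there is a `β` to its right in its row or an `α`
below it in its column. -/
def ForcedEmpty (n : ℕ) (F : Fin n → Fin n → Option MSym) (i j : Fin n) : Prop :=
  (∃ j' : Fin n, j < j' ∧ F i j' = some MSym.b) ∨ (∃ i' : Fin n, i < i' ∧ F i' j = some MSym.a)

/-- A multi-Catalan tableau of size `n`: every box on the diagonal is filled (α, β or x);
a box left of a β in its row or above an α in its column is empty; a non-forced box in a
D-row and E-column contains α or β; in a D-row and A-column contains β; in an A-row and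
E-column contains α; every other box is empty. -/
def IsMCT (n : ℕ) (F : Fin n → Fin n → Option MSym) : Prop :=
  (∀ i j : Fin n, n ≤ (i : ℕ) + (j : ℕ) → F i j = none) ∧
  (∀ i : Fin n, diagRow n F i ≠ none) ∧
  (∀ i j : Fin n, (i : ℕ) + (j : ℕ) < n - 1 →
    (ForcedEmpty n F i j → F i j = none) ∧
    (¬ ForcedEmpty n F i j →
      match diagRow n F i, diagCol n F j with
      | some MSym.a, some MSym.b => F i j = some MSym.a ∨ F i j = some MSym.b
      | some MSym.a, some MSym.x => F i j = some MSym.b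
      | some MSym.x, some MSym.b => F i j = some MSym.a
      | _, _ => F i j = none))

def symToLetter : Option MSym → Letter
  | some MSym.a => Letter.D
  | some MSym.b => Letter.E
  | _ => Letter.A

/-- The type of a tableau: the word in {D, E, A} read off the diagonal from top to bottom. -/
def typeWord (n : ℕ) (F : Fin n → Fin n → Option MSym) : List Letter :=
  List.ofFn fun i : Fin n => symToLetter (diagRow n F i)

def countSym (n : ℕ) (F : Fin n → Fin n → Option MSym) (s : MSym) : ℕ :=
  (Finset.univ.filter fun p : Fin n × Fin n => F p.1 p.2 = some s).card

/-- The weight of a tableau: the product of all its α's and β's. -/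
noncomputable def wt (n : ℕ) (α β : ℝ) (F : Fin n → Fin n → Option MSym) : ℝ :=
  α ^ countSym n F MSym.a * β ^ countSym n F MSym.b

/-- The weight generating function of a word: the sum of the weights over all
multi-Catalan tableaux of that type. -/
noncomputable def wordWeight (α β : ℝ) (X : List Letter) : ℝ :=
  ∑ᶠ T : {F : Fin X.length → Fin X.length → Option MSym //
      IsMCT X.length F ∧ typeWord X.length F = X}, wt X.length α β T.1

section MCTaux

def CForced (G : ℕ → ℕ → Option MSym) (i k : ℕ) : Prop :=
  (∃ k', i ≤ k' ∧ k' < k ∧ G i k' = some MSym.b) ∨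
  (∃ i', i < i' ∧ i' ≤ k ∧ G i' k = some MSym.a)

def Clean (n : ℕ) (G : ℕ → ℕ → Option MSym) : Prop :=
  (∀ i k, (k < i ∨ n ≤ k) → G i k = none) ∧
  (∀ i, i < n → G i i = some MSym.a ∨ G i i = some MSym.b) ∧
  (∀ i k, i < k → k < n →
    ((G i k = none ↔ CForced G i k) ∧ G i k ≠ some MSym.x))

abbrev CS (n : ℕ) := {G : ℕ → ℕ → Option MSym // Clean n G}

def toClean (n : ℕ) (F : Fin n → Fin n → Option MSym) : ℕ → ℕ → Option MSym :=
  fun i k => if h : i ≤ k ∧ k < n then F ⟨i, lt_of_le_of_lt h.1 h.2⟩ ⟨n - 1 - k, by omega⟩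
    else none

def toFin (n : ℕ) (G : ℕ → ℕ → Option MSym) : Fin n → Fin n → Option MSym :=
  fun i j => G i (n - 1 - (j : ℕ))

lemma msym_cases (o : Option MSym) (h1 : o ≠ none) (h2 : o ≠ some MSym.x) :
    o = some MSym.a ∨ o = some MSym.b := by
  rcases o with _ | s
  · exact absurd rfl h1
  · cases s <;> simp_all

lemma fin_congr {n : ℕ} (F : Fin n → Fin n → Option MSym) {i i' j j' : Fin n}
    (hi : (i : ℕ) = i') (hj : (j : ℕ) = j') : F i j = F i' j' := by
  congr 1 <;> [exact Fin.ext hi; exact Fin.ext hj]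

lemma tc_apply (n : ℕ) (F : Fin n → Fin n → Option MSym) (i k : ℕ) (h1 : i ≤ k) (h2 : k < n) :
    toClean n F i k = F ⟨i, by omega⟩ ⟨n - 1 - k, by omega⟩ := dif_pos ⟨h1, h2⟩

lemma noA_iff (n : ℕ) (F : Fin n → Fin n → Option MSym) :
    (typeWord n F).count Letter.A = 0 ↔ ∀ i : Fin n, symToLetter (diagRow n F i) ≠ Letter.A := by
  rw [List.count_eq_zero]
  simp [typeWord, List.mem_ofFn, eq_comm]

end MCTaux
lemma tc_apply' (n : ℕ) (F : Fin n → Fin n → Option MSym) (i k : ℕ) (h1 : i ≤ k) (h2 : k < n)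
    (ifin jfin : Fin n) (hi : (ifin : ℕ) = i) (hj : (jfin : ℕ) = n - 1 - k) :
    toClean n F i k = F ifin jfin := by
  rw [tc_apply n F i k h1 h2]; exact fin_congr F (by simpa using hi.symm) (by simpa using hj.symm)

lemma forced_iff (n : ℕ) (F : Fin n → Fin n → Option MSym)
    (hs : ∀ i j : Fin n, n ≤ (i : ℕ) + j → F i j = none)
    {i k : ℕ} {ifin jfin : Fin n} (hi : (ifin : ℕ) = i) (hj : (jfin : ℕ) = n - 1 - k)
    (hik : i < k) (hkn : k < n) :
    ForcedEmpty n F ifin jfin ↔ CForced (toClean n F) i k := by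
  constructor
  · rintro (⟨j', hlt, hb⟩ | ⟨i', hlt, ha⟩)
    · have hlt' : (jfin : ℕ) < j' := hlt
      have h2 : i + (j' : ℕ) < n := by
        by_contra hc
        rw [hs ifin j' (by omega)] at hb
        exact nomatch hb
      have hj' : (j' : ℕ) < n := j'.isLt
      exact Or.inl ⟨n - 1 - j', by omega, by omega,
        by rw [tc_apply' n F i (n - 1 - j') (by omega) (by omega) ifin j' hi (by omega)]; exact hb⟩
    · have hlt' : (ifin : ℕ) < i' := hlt
      have h2 : (i' : ℕ) + (jfin : ℕ) < n := by
        by_contra hc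
        rw [hs i' jfin (by omega)] at ha
        exact nomatch ha
      exact Or.inr ⟨i', by omega, by omega,
        by rw [tc_apply' n F i' k (by omega) hkn i' jfin rfl hj]; exact ha⟩
  · rintro (⟨k', h1, h2, hb⟩ | ⟨i', h1, h2, ha⟩)
    · left
      refine ⟨⟨n - 1 - k', by omega⟩, ?_, ?_⟩
      · show (jfin : ℕ) < n - 1 - k'
        omega
      · rw [tc_apply' n F i k' h1 (by omega) ifin ⟨n - 1 - k', by omega⟩ hi rfl] at hb
        exact hb
    · right
      refine ⟨⟨i', by omega⟩, ?_, ?_⟩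
      · show (ifin : ℕ) < i'
        omega
      · rw [tc_apply' n F i' k h2 hkn ⟨i', by omega⟩ jfin rfl hj] at ha
        exact ha
lemma diagRow_eq (n : ℕ) (F : Fin n → Fin n → Option MSym) (i : ℕ) (hi : i < n) :
    toClean n F i i = diagRow n F ⟨i, hi⟩ := by
  rw [diagRow]
  exact tc_apply' n F i i le_rfl hi _ _ rfl rfl

lemma clean_of_mct (n : ℕ) (F : Fin n → Fin n → Option MSym) (h : IsMCT n F)
    (hA : (typeWord n F).count Letter.A = 0) : Clean n (toClean n F) := by
  obtain ⟨h1, h2, h3⟩ := h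
  have hdiag : ∀ i : Fin n, diagRow n F i = some MSym.a ∨ diagRow n F i = some MSym.b := by
    intro i
    refine msym_cases _ (h2 i) (fun hx => (noA_iff n F).1 hA i ?_)
    rw [hx]; rfl
  refine ⟨?_, ?_, ?_⟩
  · intro i k hk
    rw [toClean, dif_neg (by omega)]
  · intro i hi
    rw [diagRow_eq n F i hi]
    exact hdiag _
  · intro i k hik hkn
    have hint : ((⟨i, by omega⟩ : Fin n) : ℕ) + ((⟨n - 1 - k, by omega⟩ : Fin n) : ℕ) < n - 1 := by
      simp; omega
    have hfe := forced_iff n F h1 (ifin := ⟨i, by omega⟩) (jfin := ⟨n - 1 - k, by omega⟩)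
      rfl rfl hik hkn
    have hG : toClean n F i k = F ⟨i, by omega⟩ ⟨n - 1 - k, by omega⟩ :=
      tc_apply' n F i k hik.le hkn _ _ rfl rfl
    have h3' := h3 ⟨i, by omega⟩ ⟨n - 1 - k, by omega⟩ hint
    by_cases hf : ForcedEmpty n F ⟨i, by omega⟩ ⟨n - 1 - k, by omega⟩
    · have hnone : F (⟨i, by omega⟩ : Fin n) ⟨n - 1 - k, by omega⟩ = none := h3'.1 hf
      rw [hG, hnone]
      exact ⟨iff_of_true rfl (hfe.mp hf), by simp⟩
    · have hdr : diagRow n F ⟨i, by omega⟩ = some MSym.a := by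
        rcases hdiag ⟨i, by omega⟩ with hh | hh
        · exact hh
        · exfalso
          apply hf
          left
          refine ⟨⟨n - 1 - i, by omega⟩, ?_, ?_⟩
          · show ((⟨n - 1 - k, by omega⟩ : Fin n) : ℕ) < n - 1 - i
            simp; omega
          · rw [diagRow] at hh; exact hh
      have ecol : diagCol n F ⟨n - 1 - k, by omega⟩ = diagRow n F ⟨k, hkn⟩ := by
        rw [diagCol, diagRow]
        exact fin_congr F (by simp; omega) (by simp)
      have hdc : diagCol n F ⟨n - 1 - k, by omega⟩ = some MSym.b := by
        rcases hdiag ⟨k, hkn⟩ with hh | hh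
        · exfalso
          apply hf
          right
          refine ⟨⟨k, hkn⟩, ?_, ?_⟩
          · show (i : ℕ) < k
            exact hik
          · rw [diagRow] at hh
            refine Eq.trans (fin_congr F rfl ?_) hh
            simp
        · rw [ecol]; exact hh
      have hmatch := h3'.2 hf
      simp only [hdr, hdc] at hmatch
      have hm2 : F (⟨i, by omega⟩ : Fin n) ⟨n - 1 - k, by omega⟩ = some MSym.a ∨
          F (⟨i, by omega⟩ : Fin n) ⟨n - 1 - k, by omega⟩ = some MSym.b := hmatch
      refine ⟨iff_of_false ?_ (fun hc => hf (hfe.mpr hc)), ?_⟩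
      · rcases hm2 with hh | hh <;> rw [hG, hh] <;> simp
      · rcases hm2 with hh | hh <;> rw [hG, hh] <;> simp
lemma toClean_toFin (n : ℕ) (G : ℕ → ℕ → Option MSym)
    (hs : ∀ i k, (k < i ∨ n ≤ k) → G i k = none) :
    toClean n (toFin n G) = G := by
  funext i k
  by_cases h : i ≤ k ∧ k < n
  · rw [tc_apply n _ i k h.1 h.2]
    show G i (n - 1 - (n - 1 - k)) = G i k
    congr 1
    omega
  · rw [toClean, dif_neg h]
    exact (hs i k (by omega)).symm

lemma toFin_toClean (n : ℕ) (F : Fin n → Fin n → Option MSym)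
    (h1 : ∀ i j : Fin n, n ≤ (i : ℕ) + j → F i j = none) :
    toFin n (toClean n F) = F := by
  funext i j
  show toClean n F i (n - 1 - (j : ℕ)) = F i j
  by_cases h : (i : ℕ) + (j : ℕ) < n
  · rw [tc_apply' n F i (n - 1 - (j : ℕ)) (by omega) (by have := j.isLt; omega) i j rfl
      (by have := j.isLt; omega)]
  · rw [toClean, dif_neg (by have := j.isLt; omega), h1 i j (by omega)]

lemma mct_of_clean (n : ℕ) (G : ℕ → ℕ → Option MSym) (h : Clean n G) :
    IsMCT n (toFin n G) ∧ (typeWord n (toFin n G)).count Letter.A = 0 := by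
  obtain ⟨hs, hd, hc⟩ := h
  have h1 : ∀ i j : Fin n, n ≤ (i : ℕ) + j → toFin n G i j = none := by
    intro i j hij
    show G i (n - 1 - (j : ℕ)) = none
    exact hs _ _ (Or.inl (by have := j.isLt; omega))
  have hGF : toClean n (toFin n G) = G := toClean_toFin n G hs
  have hdr : ∀ i : Fin n, diagRow n (toFin n G) i = G i i := by
    intro i
    rw [diagRow]
    show G i (n - 1 - (n - 1 - (i : ℕ))) = G i i
    congr 1
    have := i.isLt
    omega
  refine ⟨⟨h1, ?_, ?_⟩, ?_⟩
  · intro i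
    rw [hdr i]
    rcases hd i i.isLt with hh | hh <;> simp [hh]
  · intro i j hint
    have hjn := j.isLt
    have hin := i.isLt
    have hik : (i : ℕ) < n - 1 - (j : ℕ) := by omega
    have hkn : n - 1 - (j : ℕ) < n := by omega
    have hfe := forced_iff n (toFin n G) h1 (ifin := i) (jfin := j) rfl (by omega) hik hkn
    rw [hGF] at hfe
    have hval : toFin n G i j = G i (n - 1 - (j : ℕ)) := rfl
    have hcc := hc i (n - 1 - (j : ℕ)) hik hkn
    constructor
    · intro hf
      rw [hval]
      exact hcc.1.mpr (hfe.mp hf)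
    · intro hf
      have hnc : ¬ CForced G i (n - 1 - (j : ℕ)) := fun hc' => hf (hfe.mpr hc')
      have hGii : G i i = some MSym.a := by
        rcases hd i hin with hh | hh
        · exact hh
        · exact absurd (Or.inl ⟨i, le_rfl, hik, hh⟩) hnc
      have hGkk : G (n - 1 - (j : ℕ)) (n - 1 - (j : ℕ)) = some MSym.b := by
        rcases hd (n - 1 - (j : ℕ)) hkn with hh | hh
        · exact absurd (Or.inr ⟨n - 1 - (j : ℕ), hik, le_rfl, hh⟩) hnc
        · exact hh
      have hdc : diagCol n (toFin n G) j = G (n - 1 - (j : ℕ)) (n - 1 - (j : ℕ)) := rfl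
      simp only [hdr, hdc, hGii, hGkk]
      rw [hval]
      exact msym_cases _ (fun hn => hnc (hcc.1.mp hn)) hcc.2
  · rw [noA_iff]
    intro i hA
    rw [hdr i] at hA
    rcases hd i i.isLt with hh | hh <;> rw [hh] at hA <;> exact Letter.noConfusion hA

def equivA (n : ℕ) :
    {F : Fin n → Fin n → Option MSym //
      IsMCT n F ∧ (typeWord n F).count Letter.A = 0} ≃ CS n where
  toFun F := ⟨toClean n F.1, clean_of_mct n F.1 F.2.1 F.2.2⟩
  invFun G := ⟨toFin n G.1, (mct_of_clean n G.1 G.2).1, (mct_of_clean n G.1 G.2).2⟩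
  left_inv F := Subtype.ext (toFin_toClean n F.1 F.2.1.1)
  right_inv G := Subtype.ext (toClean_toFin n G.1 G.2.1)
def shiftG (G : ℕ → ℕ → Option MSym) : ℕ → ℕ → Option MSym := fun i k => G (i + 1) (k + 1)

open scoped Classical in
noncomputable def consA (G' : ℕ → ℕ → Option MSym) : ℕ → ℕ → Option MSym := fun i k =>
  if i = 0 then (if k = 0 then some MSym.b else none)
  else if k = 0 then none else G' (i - 1) (k - 1)

open scoped Classical in
noncomputable def consC (n : ℕ) (G' : ℕ → ℕ → Option MSym) : ℕ → ℕ → Option MSym := fun i k =>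
  if i = 0 then
    (if k = 0 then some MSym.a
     else if k ≤ n ∧ ¬ ∃ i' < k, G' i' (k - 1) = some MSym.a then some MSym.a else none)
  else if k = 0 then none else G' (i - 1) (k - 1)

lemma cforced_shift_iff (G H : ℕ → ℕ → Option MSym) (d i k : ℕ)
    (hrow : ∀ k', i ≤ k' → k' < k → H i k' = G (i + d) (k' + d))
    (hcol : ∀ i', i < i' → i' ≤ k → H i' k = G (i' + d) (k + d)) :
    CForced H i k ↔ CForced G (i + d) (k + d) := by
  constructor
  · rintro (⟨k', h1, h2, hb⟩ | ⟨i', h1, h2, ha⟩)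
    · exact Or.inl ⟨k' + d, by omega, by omega, by rw [← hrow k' h1 h2]; exact hb⟩
    · exact Or.inr ⟨i' + d, by omega, by omega, by rw [← hcol i' h1 h2]; exact ha⟩
  · rintro (⟨k', h1, h2, hb⟩ | ⟨i', h1, h2, ha⟩)
    · refine Or.inl ⟨k' - d, by omega, by omega, ?_⟩
      rw [hrow (k' - d) (by omega) (by omega), show k' - d + d = k' by omega]
      exact hb
    · refine Or.inr ⟨i' - d, by omega, by omega, ?_⟩
      rw [hcol (i' - d) (by omega) (by omega), show i' - d + d = i' by omega]
      exact ha

lemma clean_shift (n : ℕ) (G : ℕ → ℕ → Option MSym) (h : Clean (n + 1) G) :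
    Clean n (shiftG G) := by
  obtain ⟨hs, hd, hc⟩ := h
  refine ⟨?_, ?_, ?_⟩
  · intro i k hk
    exact hs (i + 1) (k + 1) (by omega)
  · intro i hi
    exact hd (i + 1) (by omega)
  · intro i k hik hkn
    have hiff : CForced (shiftG G) i k ↔ CForced G (i + 1) (k + 1) :=
      cforced_shift_iff G (shiftG G) 1 i k (fun _ _ _ => rfl) (fun _ _ _ => rfl)
    have h2 := hc (i + 1) (k + 1) (by omega) (by omega)
    exact ⟨h2.1.trans hiff.symm, h2.2⟩

lemma row0_unique_b (m : ℕ) (G : ℕ → ℕ → Option MSym) (h : Clean m G) {k1 k2 : ℕ}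
    (h1 : G 0 k1 = some MSym.b) (h2 : G 0 k2 = some MSym.b) : k1 = k2 := by
  have aux : ∀ a b : ℕ, a < b → G 0 a = some MSym.b → G 0 b = some MSym.b → False := by
    intro a b hab ha hb
    have hbm : b < m := by
      by_contra hc
      rw [h.1 0 b (by omega)] at hb
      exact nomatch hb
    have := (h.2.2 0 b (by omega) hbm).1.mpr (Or.inl ⟨a, by omega, hab, ha⟩)
    rw [this] at hb
    exact nomatch hb
  rcases lt_trichotomy k1 k2 with hlt | he | hlt
  · exact absurd (aux _ _ hlt h1 h2) not_false
  · exact he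
  · exact absurd (aux _ _ hlt h2 h1) not_false
lemma consA_00 (H : ℕ → ℕ → Option MSym) : consA H 0 0 = some MSym.b := by simp [consA]
lemma consA_0k (H : ℕ → ℕ → Option MSym) (k : ℕ) (hk : k ≠ 0) : consA H 0 k = none := by
  simp [consA, hk]
lemma consA_i0 (H : ℕ → ℕ → Option MSym) (i : ℕ) (hi : i ≠ 0) : consA H i 0 = none := by
  simp [consA, hi]
lemma consA_pos (H : ℕ → ℕ → Option MSym) (i k : ℕ) (hi : i ≠ 0) (hk : k ≠ 0) :
    consA H i k = H (i - 1) (k - 1) := by simp [consA, hi, hk]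

lemma clean_consA (n : ℕ) (H : ℕ → ℕ → Option MSym) (h : Clean n H) :
    Clean (n + 1) (consA H) := by
  obtain ⟨hs, hd, hc⟩ := h
  refine ⟨?_, ?_, ?_⟩
  · intro i k hk
    rcases Nat.eq_zero_or_pos i with hi | hi
    · subst hi
      rw [consA_0k H k (by omega)]
    · rcases Nat.eq_zero_or_pos k with hk0 | hk0
      · subst hk0
        rw [consA_i0 H i (by omega)]
      · rw [consA_pos H i k (by omega) (by omega)]
        exact hs (i - 1) (k - 1) (by omega)
  · intro i hi
    rcases Nat.eq_zero_or_pos i with hi0 | hi0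
    · subst hi0
      rw [consA_00]
      exact Or.inr rfl
    · rw [consA_pos H i i (by omega) (by omega)]
      exact hd (i - 1) (by omega)
  · intro i k hik hkn
    rcases Nat.eq_zero_or_pos i with hi0 | hi0
    · subst hi0
      have hval : consA H 0 k = none := consA_0k H k (by omega)
      exact ⟨iff_of_true hval (Or.inl ⟨0, le_rfl, by omega, consA_00 H⟩), by rw [hval]; simp⟩
    · have hval : consA H i k = H (i - 1) (k - 1) := consA_pos H i k (by omega) (by omega)
      have hiff := cforced_shift_iff (consA H) H 1 (i - 1) (k - 1)
        (fun k' h1 h2 => by rw [consA_pos H _ _ (by omega) (by omega)]; simp)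
        (fun i' h1 h2 => by rw [consA_pos H _ _ (by omega) (by omega)]; simp)
      rw [show i - 1 + 1 = i by omega, show k - 1 + 1 = k by omega] at hiff
      replace hiff := hiff.symm
      have h2 := hc (i - 1) (k - 1) (by omega) (by omega)
      rw [hval]
      exact ⟨h2.1.trans hiff.symm, h2.2⟩

noncomputable def equivCaseA (n : ℕ) :
    {G : CS (n + 1) // G.1 0 0 = some MSym.b} ≃ CS n where
  toFun G := ⟨shiftG G.1.1, clean_shift n G.1.1 G.1.2⟩
  invFun H := ⟨⟨consA H.1, clean_consA n H.1 H.2⟩, consA_00 H.1⟩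
  left_inv := by
    rintro ⟨⟨G, hG⟩, hb⟩
    refine Subtype.ext (Subtype.ext (funext fun i => funext fun k => ?_))
    show consA (shiftG G) i k = G i k
    rcases Nat.eq_zero_or_pos i with hi0 | hi0
    · subst hi0
      rcases Nat.eq_zero_or_pos k with hk0 | hk0
      · subst hk0
        rw [consA_00]
        exact hb.symm
      · rw [consA_0k _ k (by omega)]
        rcases Nat.lt_or_ge k (n + 1) with hkn | hkn
        · exact ((hG.2.2 0 k (by omega) hkn).1.mpr (Or.inl ⟨0, le_rfl, by omega, hb⟩)).symm
        · exact (hG.1 0 k (by omega)).symm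
    · rcases Nat.eq_zero_or_pos k with hk0 | hk0
      · subst hk0
        rw [consA_i0 _ i (by omega)]
        exact (hG.1 i 0 (by omega)).symm
      · rw [consA_pos _ i k (by omega) (by omega)]
        show shiftG G (i - 1) (k - 1) = G i k
        show G (i - 1 + 1) (k - 1 + 1) = G i k
        congr 1 <;> omega
  right_inv := by
    rintro ⟨H, hH⟩
    refine Subtype.ext (funext fun i => funext fun k => ?_)
    show consA H (i + 1) (k + 1) = H i k
    rw [consA_pos H _ _ (by omega) (by omega), Nat.add_sub_cancel, Nat.add_sub_cancel]
lemma consC_00 (n : ℕ) (H : ℕ → ℕ → Option MSym) : consC n H 0 0 = some MSym.a := by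
  simp [consC]

lemma consC_i0 (n : ℕ) (H : ℕ → ℕ → Option MSym) (i : ℕ) (hi : i ≠ 0) :
    consC n H i 0 = none := by simp [consC, hi]

lemma consC_pos (n : ℕ) (H : ℕ → ℕ → Option MSym) (i k : ℕ) (hi : i ≠ 0) (hk : k ≠ 0) :
    consC n H i k = H (i - 1) (k - 1) := by simp [consC, hi, hk]

open scoped Classical in
lemma consC_0k (n : ℕ) (H : ℕ → ℕ → Option MSym) (k : ℕ) (hk : k ≠ 0) :
    consC n H 0 k =
      if k ≤ n ∧ ¬ ∃ i' < k, H i' (k - 1) = some MSym.a then some MSym.a else none := by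
  simp [consC, hk]

lemma consC_0_ne_b (n : ℕ) (H : ℕ → ℕ → Option MSym) (k : ℕ) :
    consC n H 0 k ≠ some MSym.b := by
  rcases Nat.eq_zero_or_pos k with hk | hk
  · subst hk; rw [consC_00]; simp
  · rw [consC_0k n H k (by omega)]
    split <;> simp

lemma clean_consC (n : ℕ) (H : ℕ → ℕ → Option MSym) (h : Clean n H) :
    Clean (n + 1) (consC n H) := by
  obtain ⟨hs, hd, hc⟩ := h
  refine ⟨?_, ?_, ?_⟩
  · intro i k hk
    rcases Nat.eq_zero_or_pos i with hi | hi
    · subst hi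
      rw [consC_0k n H k (by omega)]
      rw [if_neg (by omega)]
    · rcases Nat.eq_zero_or_pos k with hk0 | hk0
      · subst hk0
        rw [consC_i0 n H i (by omega)]
      · rw [consC_pos n H i k (by omega) (by omega)]
        exact hs (i - 1) (k - 1) (by omega)
  · intro i hi
    rcases Nat.eq_zero_or_pos i with hi0 | hi0
    · subst hi0
      rw [consC_00]
      exact Or.inl rfl
    · rw [consC_pos n H i i (by omega) (by omega)]
      exact hd (i - 1) (by omega)
  · intro i k hik hkn
    rcases Nat.eq_zero_or_pos i with hi0 | hi0
    · subst hi0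
      have hforced : CForced (consC n H) 0 k ↔ ∃ i' < k, H i' (k - 1) = some MSym.a := by
        constructor
        · rintro (⟨k', h1, h2, hb⟩ | ⟨i', h1, h2, ha⟩)
          · exact absurd hb (consC_0_ne_b n H k')
          · rw [consC_pos n H i' k (by omega) (by omega)] at ha
            exact ⟨i' - 1, by omega, ha⟩
        · rintro ⟨i', h1, ha⟩
          exact Or.inr ⟨i' + 1, by omega, by omega,
            by rw [consC_pos n H (i' + 1) k (by omega) (by omega)]; simpa using ha⟩
      rw [consC_0k n H k (by omega)]
      by_cases hP : ∃ i' < k, H i' (k - 1) = some MSym.a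
      · rw [if_neg (fun hcond => hcond.2 hP)]
        exact ⟨iff_of_true rfl (hforced.mpr hP), by simp⟩
      · rw [if_pos ⟨by omega, hP⟩]
        exact ⟨iff_of_false (by simp) (fun hc' => hP (hforced.mp hc')), by simp⟩
    · have hval : consC n H i k = H (i - 1) (k - 1) := consC_pos n H i k (by omega) (by omega)
      have hiff := cforced_shift_iff (consC n H) H 1 (i - 1) (k - 1)
        (fun k' h1 h2 => by rw [consC_pos n H _ _ (by omega) (by omega)]; simp)
        (fun i' h1 h2 => by rw [consC_pos n H _ _ (by omega) (by omega)]; simp)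
      rw [show i - 1 + 1 = i by omega, show k - 1 + 1 = k by omega] at hiff
      have h2 := hc (i - 1) (k - 1) (by omega) (by omega)
      rw [hval]
      exact ⟨h2.1.trans hiff, h2.2⟩

noncomputable def equivCaseC (n : ℕ) :
    {G : CS (n + 1) // G.1 0 0 = some MSym.a ∧ ∀ k, G.1 0 k ≠ some MSym.b} ≃ CS n where
  toFun G := ⟨shiftG G.1.1, clean_shift n G.1.1 G.1.2⟩
  invFun H := ⟨⟨consC n H.1, clean_consC n H.1 H.2⟩, consC_00 n H.1, consC_0_ne_b n H.1⟩
  left_inv := by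
    rintro ⟨⟨G, hG⟩, ha, hnb⟩
    refine Subtype.ext (Subtype.ext (funext fun i => funext fun k => ?_))
    show consC n (shiftG G) i k = G i k
    rcases Nat.eq_zero_or_pos i with hi0 | hi0
    · subst hi0
      rcases Nat.eq_zero_or_pos k with hk0 | hk0
      · subst hk0
        rw [consC_00]
        exact ha.symm
      · rw [consC_0k n _ k (by omega)]
        rcases Nat.lt_or_ge n k with hkn | hkn
        · rw [if_neg (by omega)]
          exact (hG.1 0 k (by omega)).symm
        · have hcf : CForced G 0 k ↔ ∃ i' < k, shiftG G i' (k - 1) = some MSym.a := by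
            constructor
            · rintro (⟨k', h1, h2, hb⟩ | ⟨i', h1, h2, ha'⟩)
              · exact absurd hb (hnb k')
              · refine ⟨i' - 1, by omega, ?_⟩
                show G (i' - 1 + 1) (k - 1 + 1) = some MSym.a
                rw [show i' - 1 + 1 = i' by omega, show k - 1 + 1 = k by omega]
                exact ha'
            · rintro ⟨i', h1, ha'⟩
              refine Or.inr ⟨i' + 1, by omega, by omega, ?_⟩
              show G (i' + 1) k = some MSym.a
              have : G (i' + 1) (k - 1 + 1) = some MSym.a := ha'
              rwa [show k - 1 + 1 = k by omega] at this
          have hcell := hG.2.2 0 k (by omega) (by omega)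
          by_cases hP : ∃ i' < k, shiftG G i' (k - 1) = some MSym.a
          · rw [if_neg (fun hcond => hcond.2 hP)]
            exact (hcell.1.mpr (hcf.mpr hP)).symm
          · rw [if_pos ⟨hkn, hP⟩]
            have hne : G 0 k ≠ none := fun hn => hP (hcf.mp (hcell.1.mp hn))
            rcases msym_cases _ hne hcell.2 with hh | hh
            · exact hh.symm
            · exact absurd hh (hnb k)
    · rcases Nat.eq_zero_or_pos k with hk0 | hk0
      · subst hk0
        rw [consC_i0 n _ i (by omega)]
        exact (hG.1 i 0 (by omega)).symm
      · rw [consC_pos n _ i k (by omega) (by omega)]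
        show G (i - 1 + 1) (k - 1 + 1) = G i k
        congr 1 <;> omega
  right_inv := by
    rintro ⟨H, hH⟩
    refine Subtype.ext (funext fun i => funext fun k => ?_)
    show shiftG (consC n H) i k = H i k
    show consC n H (i + 1) (k + 1) = H i k
    rw [consC_pos n H _ _ (by omega) (by omega), Nat.add_sub_cancel, Nat.add_sub_cancel]
def innerG (kv : ℕ) (G : ℕ → ℕ → Option MSym) : ℕ → ℕ → Option MSym :=
  fun i k => if k < kv then G (i + 1) (k + 1) else none

def outerG (kv : ℕ) (G : ℕ → ℕ → Option MSym) : ℕ → ℕ → Option MSym :=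
  fun i k => G (i + kv + 2) (k + kv + 2)

open scoped Classical in
noncomputable def consB (kv : ℕ) (Gi Go : ℕ → ℕ → Option MSym) : ℕ → ℕ → Option MSym :=
  fun i k =>
  if i = 0 then
    if k = 0 then some MSym.a
    else if k ≤ kv then (if ∃ i' < k, Gi i' (k - 1) = some MSym.a then none else some MSym.a)
    else if k = kv + 1 then some MSym.b
    else none
  else if i ≤ kv then
    if k ≤ kv then (if k = 0 then none else Gi (i - 1) (k - 1))
    else if k = kv + 1 then (if ∃ j < kv, Gi (i - 1) j = some MSym.b then none else some MSym.b)
    else none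
  else if i = kv + 1 then (if k = kv + 1 then some MSym.b else none)
  else if k < kv + 2 then none else Go (i - (kv + 2)) (k - (kv + 2))

section consBapp
variable (kv : ℕ) (Gi Go : ℕ → ℕ → Option MSym)

lemma consB_00 : consB kv Gi Go 0 0 = some MSym.a := by simp [consB]

open scoped Classical in
lemma consB_0mid (k : ℕ) (h1 : 0 < k) (h2 : k ≤ kv) :
    consB kv Gi Go 0 k =
      (if ∃ i' < k, Gi i' (k - 1) = some MSym.a then none else some MSym.a) := by
  simp [consB, h2, Nat.pos_iff_ne_zero.mp h1]

lemma consB_0k0 : consB kv Gi Go 0 (kv + 1) = some MSym.b := by simp [consB]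

lemma consB_0big (k : ℕ) (h : kv + 1 < k) : consB kv Gi Go 0 k = none := by
  simp [consB, show k ≠ 0 by omega, show ¬ k ≤ kv by omega, show k ≠ kv + 1 by omega]

lemma consB_i0 (i : ℕ) (h1 : 0 < i) (h2 : i ≤ kv) : consB kv Gi Go i 0 = none := by
  simp [consB, h2, Nat.pos_iff_ne_zero.mp h1]

lemma consB_mid (i k : ℕ) (h1 : 0 < i) (h2 : i ≤ kv) (h3 : 0 < k) (h4 : k ≤ kv) :
    consB kv Gi Go i k = Gi (i - 1) (k - 1) := by
  simp [consB, h2, h4, Nat.pos_iff_ne_zero.mp h1, Nat.pos_iff_ne_zero.mp h3]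

open scoped Classical in
lemma consB_ik0 (i : ℕ) (h1 : 0 < i) (h2 : i ≤ kv) :
    consB kv Gi Go i (kv + 1) =
      (if ∃ j < kv, Gi (i - 1) j = some MSym.b then none else some MSym.b) := by
  simp [consB, h2, Nat.pos_iff_ne_zero.mp h1]

lemma consB_ibig (i k : ℕ) (h1 : 0 < i) (h2 : i ≤ kv) (h3 : kv + 1 < k) :
    consB kv Gi Go i k = none := by
  simp [consB, h2, Nat.pos_iff_ne_zero.mp h1, show ¬ k ≤ kv by omega, show k ≠ kv + 1 by omega]

lemma consB_diagk0 : consB kv Gi Go (kv + 1) (kv + 1) = some MSym.b := by simp [consB]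

lemma consB_rowk0 (k : ℕ) (h : k ≠ kv + 1) : consB kv Gi Go (kv + 1) k = none := by
  simp [consB, h]

lemma consB_out (i k : ℕ) (h1 : kv + 2 ≤ i) (h2 : kv + 2 ≤ k) :
    consB kv Gi Go i k = Go (i - (kv + 2)) (k - (kv + 2)) := by
  simp [consB, show i ≠ 0 by omega, show ¬ i ≤ kv by omega, show i ≠ kv + 1 by omega,
    show ¬ k < kv + 2 by omega]

lemma consB_outlow (i k : ℕ) (h1 : kv + 2 ≤ i) (h2 : k < kv + 2) :
    consB kv Gi Go i k = none := by
  simp [consB, show i ≠ 0 by omega, show ¬ i ≤ kv by omega, show i ≠ kv + 1 by omega,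
    show k < kv + 2 from h2]

lemma consB_row0_ne_b (k : ℕ) (h : k ≠ kv + 1) : consB kv Gi Go 0 k ≠ some MSym.b := by
  rcases Nat.eq_zero_or_pos k with hk | hk
  · subst hk; rw [consB_00]; simp
  · rcases Nat.lt_or_ge kv k with hlt | hle
    · rw [consB_0big kv Gi Go k (by omega)]; simp
    · rw [consB_0mid kv Gi Go k hk hle]; split <;> simp

lemma consB_colk0_ne_a (i : ℕ) : consB kv Gi Go i (kv + 1) ≠ some MSym.a := by
  rcases Nat.eq_zero_or_pos i with hi | hi
  · subst hi; rw [consB_0k0]; simp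
  · rcases Nat.lt_or_ge kv i with hlt | hle
    · rcases Nat.lt_or_ge (kv + 1) i with hlt2 | hle2
      · rw [consB_outlow kv Gi Go i (kv + 1) (by omega) (by omega)]; simp
      · rw [show i = kv + 1 by omega, consB_diagk0]; simp
    · rw [consB_ik0 kv Gi Go i hi hle]; split <;> simp

end consBapp

lemma clean_inner (n kv : ℕ) (hkv : kv ≤ n) (G : ℕ → ℕ → Option MSym) (h : Clean (n + 1) G) :
    Clean kv (innerG kv G) := by
  obtain ⟨hs, hd, hc⟩ := h
  refine ⟨?_, ?_, ?_⟩
  · intro i k hk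
    unfold innerG
    rcases Nat.lt_or_ge k kv with hlt | hle
    · rw [if_pos hlt]
      exact hs (i + 1) (k + 1) (by omega)
    · rw [if_neg (by omega)]
  · intro i hi
    unfold innerG
    rw [if_pos hi]
    exact hd (i + 1) (by omega)
  · intro i k hik hkn
    have hval : innerG kv G i k = G (i + 1) (k + 1) := by unfold innerG; rw [if_pos hkn]
    have hiff := cforced_shift_iff G (innerG kv G) 1 i k
      (fun k' hk1 hk2 => by unfold innerG; rw [if_pos (by omega)])
      (fun i' hi1 hi2 => by unfold innerG; rw [if_pos hkn])
    have h2 := hc (i + 1) (k + 1) (by omega) (by omega)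
    rw [hval]
    exact ⟨h2.1.trans hiff.symm, h2.2⟩

lemma clean_outer (n kv : ℕ) (hkv : kv < n) (G : ℕ → ℕ → Option MSym) (h : Clean (n + 1) G) :
    Clean (n - 1 - kv) (outerG kv G) := by
  obtain ⟨hs, hd, hc⟩ := h
  refine ⟨?_, ?_, ?_⟩
  · intro i k hk
    exact hs (i + kv + 2) (k + kv + 2) (by omega)
  · intro i hi
    exact hd (i + kv + 2) (by omega)
  · intro i k hik hkn
    have hiff := cforced_shift_iff G (outerG kv G) (kv + 2) i k
      (fun k' hk1 hk2 => by unfold outerG; ring_nf)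
      (fun i' hi1 hi2 => by unfold outerG; ring_nf)
    have h2 := hc (i + kv + 2) (k + kv + 2) (by omega) (by omega)
    have e1 : i + kv + 2 = i + (kv + 2) := by omega
    have e2 : k + kv + 2 = k + (kv + 2) := by omega
    rw [e1, e2] at h2
    have hval : outerG kv G i k = G (i + (kv + 2)) (k + (kv + 2)) := by
      unfold outerG; rw [← e1, ← e2]
    rw [hval]
    exact ⟨h2.1.trans hiff.symm, h2.2⟩
lemma clean_consB (n kv : ℕ) (hkv : kv < n) (Gi Go : ℕ → ℕ → Option MSym)
    (hi : Clean kv Gi) (ho : Clean (n - 1 - kv) Go) : Clean (n + 1) (consB kv Gi Go) := by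
  obtain ⟨his, hid, hic⟩ := hi
  obtain ⟨hos, hod, hoc⟩ := ho
  refine ⟨?_, ?_, ?_⟩
  · -- support
    intro i k hk
    rcases Nat.eq_zero_or_pos i with hi0 | hi0
    · subst hi0
      rw [consB_0big kv Gi Go k (by omega)]
    · rcases Nat.lt_or_ge kv i with h1 | h1
      · rcases Nat.lt_or_ge (kv + 1) i with h2 | h2
        · rcases Nat.lt_or_ge k (kv + 2) with h3 | h3
          · exact consB_outlow kv Gi Go i k (by omega) h3
          · rw [consB_out kv Gi Go i k (by omega) h3]
            exact hos _ _ (by omega)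
        · rw [show i = kv + 1 by omega]
          exact consB_rowk0 kv Gi Go k (by omega)
      · -- 1 ≤ i ≤ kv, k < i or k ≥ n+1
        rcases Nat.lt_or_ge k i with h3 | h3
        · rcases Nat.eq_zero_or_pos k with hk0 | hk0
          · subst hk0
            exact consB_i0 kv Gi Go i hi0 h1
          · rw [consB_mid kv Gi Go i k hi0 h1 hk0 (by omega)]
            exact his _ _ (by omega)
        · rw [consB_ibig kv Gi Go i k hi0 h1 (by omega)]
  · -- diagonal
    intro i hi2
    rcases Nat.eq_zero_or_pos i with hi0 | hi0
    · subst hi0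
      rw [consB_00]
      exact Or.inl rfl
    · rcases Nat.lt_or_ge kv i with h1 | h1
      · rcases Nat.lt_or_ge (kv + 1) i with h2 | h2
        · rw [consB_out kv Gi Go i i (by omega) (by omega)]
          exact hod _ (by omega)
        · rw [show i = kv + 1 by omega, consB_diagk0]
          exact Or.inr rfl
      · rw [consB_mid kv Gi Go i i hi0 h1 hi0 h1]
        exact hid _ (by omega)
  · -- cells
    intro i k hik hkn
    rcases Nat.eq_zero_or_pos i with hi0 | hi0
    · subst hi0
      rcases Nat.lt_or_ge kv k with h1 | h1
      · rcases Nat.eq_or_lt_of_le (show kv + 1 ≤ k by omega) with h2 | h2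
        · -- k = kv+1
          rw [← h2, consB_0k0]
          have hnf : ¬ CForced (consB kv Gi Go) 0 (kv + 1) := by
            rintro (⟨k', hk1, hk2, hb⟩ | ⟨i', hi1, hi2, ha⟩)
            · exact consB_row0_ne_b kv Gi Go k' (by omega) hb
            · exact consB_colk0_ne_a kv Gi Go i' ha
          exact ⟨iff_of_false (by simp) hnf, by simp⟩
        · -- k > kv+1
          rw [consB_0big kv Gi Go k (by omega)]
          exact ⟨iff_of_true rfl (Or.inl ⟨kv + 1, by omega, by omega, consB_0k0 kv Gi Go⟩),
            by simp⟩
      · -- 1 ≤ k ≤ kv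
        have hforced : CForced (consB kv Gi Go) 0 k ↔ ∃ i' < k, Gi i' (k - 1) = some MSym.a := by
          constructor
          · rintro (⟨k', hk1, hk2, hb⟩ | ⟨i', hi1, hi2, ha⟩)
            · exact absurd hb (consB_row0_ne_b kv Gi Go k' (by omega))
            · rw [consB_mid kv Gi Go i' k hi1 (by omega) (by omega) h1] at ha
              exact ⟨i' - 1, by omega, ha⟩
          · rintro ⟨i', h1', ha⟩
            refine Or.inr ⟨i' + 1, by omega, by omega, ?_⟩
            rw [consB_mid kv Gi Go (i' + 1) k (by omega) (by omega) (by omega) h1]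
            simpa using ha
        rw [consB_0mid kv Gi Go k hik h1]
        by_cases hP : ∃ i' < k, Gi i' (k - 1) = some MSym.a
        · rw [if_pos hP]
          exact ⟨iff_of_true rfl (hforced.mpr hP), by simp⟩
        · rw [if_neg hP]
          exact ⟨iff_of_false (by simp) (fun hc' => hP (hforced.mp hc')), by simp⟩
    · rcases Nat.lt_or_ge kv i with h1 | h1
      · rcases Nat.lt_or_ge (kv + 1) i with h2 | h2
        · -- outer rows
          rw [consB_out kv Gi Go i k (by omega) (by omega)]
          have hiff := cforced_shift_iff (consB kv Gi Go) Go (kv + 2)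
            (i - (kv + 2)) (k - (kv + 2))
            (fun k' hk1 hk2 => by
              rw [consB_out kv Gi Go _ _ (by omega) (by omega)]
              congr 1 <;> omega)
            (fun i' hi1 hi2 => by
              rw [consB_out kv Gi Go _ _ (by omega) (by omega)]
              congr 1 <;> omega)
          rw [show i - (kv + 2) + (kv + 2) = i by omega,
            show k - (kv + 2) + (kv + 2) = k by omega] at hiff
          have h2' := hoc (i - (kv + 2)) (k - (kv + 2)) (by omega) (by omega)
          exact ⟨h2'.1.trans hiff, h2'.2⟩
        · -- i = kv+1, k > kv+1
          rw [show i = kv + 1 by omega] at hik ⊢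
          rw [consB_rowk0 kv Gi Go k (by omega)]
          exact ⟨iff_of_true rfl
            (Or.inl ⟨kv + 1, le_rfl, by omega, consB_diagk0 kv Gi Go⟩), by simp⟩
      · -- 1 ≤ i ≤ kv
        rcases Nat.lt_or_ge kv k with h3 | h3
        · rcases Nat.eq_or_lt_of_le (show kv + 1 ≤ k by omega) with h4 | h4
          · -- k = kv + 1
            rw [← h4]
            have hbridge : (∃ j < kv, Gi (i - 1) j = some MSym.b) ↔
                ∃ k', i ≤ k' ∧ k' < kv + 1 ∧ consB kv Gi Go i k' = some MSym.b := by
              constructor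
              · rintro ⟨j, hj, hb⟩
                have hj2 : i - 1 ≤ j := by
                  by_contra hc'
                  rw [his (i - 1) j (by omega)] at hb
                  exact nomatch hb
                refine ⟨j + 1, by omega, by omega, ?_⟩
                rw [consB_mid kv Gi Go i (j + 1) hi0 h1 (by omega) (by omega)]
                simpa using hb
              · rintro ⟨k', hk1, hk2, hb⟩
                rw [consB_mid kv Gi Go i k' hi0 h1 (by omega) (by omega)] at hb
                exact ⟨k' - 1, by omega, hb⟩
            have hforced : CForced (consB kv Gi Go) i (kv + 1) ↔
                ∃ j < kv, Gi (i - 1) j = some MSym.b := by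
              constructor
              · rintro (⟨k', hk1, hk2, hb⟩ | ⟨i', hi1, hi2, ha⟩)
                · exact hbridge.mpr ⟨k', hk1, hk2, hb⟩
                · exact absurd ha (consB_colk0_ne_a kv Gi Go i')
              · intro hP
                obtain ⟨k', hk1, hk2, hb⟩ := hbridge.mp hP
                exact Or.inl ⟨k', hk1, hk2, hb⟩
            rw [consB_ik0 kv Gi Go i hi0 h1]
            by_cases hP : ∃ j < kv, Gi (i - 1) j = some MSym.b
            · rw [if_pos hP]
              exact ⟨iff_of_true rfl (hforced.mpr hP), by simp⟩
            · rw [if_neg hP]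
              exact ⟨iff_of_false (by simp) (fun hc' => hP (hforced.mp hc')), by simp⟩
          · -- k > kv+1
            rw [consB_ibig kv Gi Go i k hi0 h1 h4]
            refine ⟨iff_of_true rfl ?_, by simp⟩
            by_cases hP : ∃ j < kv, Gi (i - 1) j = some MSym.b
            · obtain ⟨j, hj, hb⟩ := hP
              have hj2 : i - 1 ≤ j := by
                by_contra hc'
                rw [his (i - 1) j (by omega)] at hb
                exact nomatch hb
              refine Or.inl ⟨j + 1, by omega, by omega, ?_⟩
              rw [consB_mid kv Gi Go i (j + 1) hi0 h1 (by omega) (by omega)]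
              simpa using hb
            · refine Or.inl ⟨kv + 1, by omega, by omega, ?_⟩
              rw [consB_ik0 kv Gi Go i hi0 h1, if_neg hP]
        · -- inner cells: i < k ≤ kv
          rw [consB_mid kv Gi Go i k hi0 h1 (by omega) h3]
          have hiff := cforced_shift_iff (consB kv Gi Go) Gi 1 (i - 1) (k - 1)
            (fun k' hk1 hk2 => by
              rw [consB_mid kv Gi Go _ _ (by omega) (by omega) (by omega) (by omega)]
              congr 1 <;> omega)
            (fun i' hi1 hi2 => by
              rw [consB_mid kv Gi Go _ _ (by omega) (by omega) (by omega) (by omega)]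
              congr 1 <;> omega)
          rw [show i - 1 + 1 = i by omega, show k - 1 + 1 = k by omega] at hiff
          have h2' := hic (i - 1) (k - 1) (by omega) (by omega)
          exact ⟨h2'.1.trans hiff, h2'.2⟩
section derived
variable {n kv : ℕ} {G : ℕ → ℕ → Option MSym}

lemma der_c1 (h : Clean (n + 1) G) (hkv : kv < n) (hb : G 0 (kv + 1) = some MSym.b) :
    G 0 0 = some MSym.a := by
  rcases h.2.1 0 (by omega) with hh | hh
  · exact hh
  · exfalso
    have := (h.2.2 0 (kv + 1) (by omega) (by omega)).1.mpr (Or.inl ⟨0, le_rfl, by omega, hh⟩)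
    rw [this] at hb
    exact nomatch hb

lemma der_c3 (h : Clean (n + 1) G) (hkv : kv < n) (hb : G 0 (kv + 1) = some MSym.b)
    (i' : ℕ) (h1 : 0 < i') (h2 : i' ≤ kv + 1) : G i' (kv + 1) ≠ some MSym.a := by
  intro ha
  have := (h.2.2 0 (kv + 1) (by omega) (by omega)).1.mpr (Or.inr ⟨i', h1, h2, ha⟩)
  rw [this] at hb
  exact nomatch hb

lemma der_c4 (h : Clean (n + 1) G) (hkv : kv < n) (hb : G 0 (kv + 1) = some MSym.b) :
    G (kv + 1) (kv + 1) = some MSym.b := by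
  rcases h.2.1 (kv + 1) (by omega) with hh | hh
  · exact absurd hh (der_c3 h hkv hb (kv + 1) (by omega) le_rfl)
  · exact hh

/-- determination of column kv+1 for rows 1..kv -/
lemma der_c5 (h : Clean (n + 1) G) (hkv : kv < n) (hb : G 0 (kv + 1) = some MSym.b)
    (i : ℕ) (h1 : 0 < i) (h2 : i ≤ kv) :
    (G i (kv + 1) = none ↔ ∃ k', i ≤ k' ∧ k' < kv + 1 ∧ G i k' = some MSym.b) ∧
    ((¬ ∃ k', i ≤ k' ∧ k' < kv + 1 ∧ G i k' = some MSym.b) → G i (kv + 1) = some MSym.b) := by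
  have hcell := h.2.2 i (kv + 1) (by omega) (by omega)
  have hforced : CForced G i (kv + 1) ↔ ∃ k', i ≤ k' ∧ k' < kv + 1 ∧ G i k' = some MSym.b := by
    constructor
    · rintro (hr | ⟨i', hi1, hi2, ha⟩)
      · exact hr
      · exact absurd ha (der_c3 h hkv hb i' (by omega) hi2)
    · exact Or.inl
  constructor
  · exact hcell.1.trans hforced
  · intro hP
    have hne : G i (kv + 1) ≠ none := fun hn => hP (hforced.mp (hcell.1.mp hn))
    rcases msym_cases _ hne hcell.2 with hh | hh
    · exact absurd hh (der_c3 h hkv hb i (by omega) (by omega))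
    · exact hh

/-- determination of row 0 for cols 1..kv -/
lemma der_c6 (h : Clean (n + 1) G) (hkv : kv < n) (hb : G 0 (kv + 1) = some MSym.b)
    (k : ℕ) (h1 : 0 < k) (h2 : k ≤ kv) :
    (G 0 k = none ↔ ∃ i', 0 < i' ∧ i' ≤ k ∧ G i' k = some MSym.a) ∧
    ((¬ ∃ i', 0 < i' ∧ i' ≤ k ∧ G i' k = some MSym.a) → G 0 k = some MSym.a) := by
  have hcell := h.2.2 0 k (by omega) (by omega)
  have hforced : CForced G 0 k ↔ ∃ i', 0 < i' ∧ i' ≤ k ∧ G i' k = some MSym.a := by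
    constructor
    · rintro (⟨k', hk1, hk2, hbb⟩ | hc')
      · exfalso
        have := row0_unique_b (n + 1) G h hbb hb
        omega
      · exact hc'
    · exact Or.inr
  constructor
  · exact hcell.1.trans hforced
  · intro hP
    have hne : G 0 k ≠ none := fun hn => hP (hforced.mp (hcell.1.mp hn))
    rcases msym_cases _ hne hcell.2 with hh | hh
    · exact hh
    · exfalso
      have := row0_unique_b (n + 1) G h hh hb
      omega

/-- cross cells are empty -/
lemma der_c7 (h : Clean (n + 1) G) (hkv : kv < n) (hb : G 0 (kv + 1) = some MSym.b)
    (i k : ℕ) (h1 : 0 < i) (h2 : i ≤ kv) (h3 : kv + 1 < k) : G i k = none := by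
  rcases Nat.lt_or_ge k (n + 1) with hk | hk
  · by_cases hP : ∃ k', i ≤ k' ∧ k' < kv + 1 ∧ G i k' = some MSym.b
    · obtain ⟨k', hk1, hk2, hbb⟩ := hP
      exact (h.2.2 i k (by omega) hk).1.mpr (Or.inl ⟨k', hk1, by omega, hbb⟩)
    · have := (der_c5 h hkv hb i h1 h2).2 hP
      exact (h.2.2 i k (by omega) hk).1.mpr (Or.inl ⟨kv + 1, by omega, by omega, this⟩)
  · exact h.1 i k (by omega)

lemma der_c8 (h : Clean (n + 1) G) (hkv : kv < n) (hb : G 0 (kv + 1) = some MSym.b)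
    (k : ℕ) (h3 : kv + 1 < k) : G (kv + 1) k = none := by
  rcases Nat.lt_or_ge k (n + 1) with hk | hk
  · exact (h.2.2 (kv + 1) k (by omega) hk).1.mpr
      (Or.inl ⟨kv + 1, le_rfl, by omega, der_c4 h hkv hb⟩)
  · exact h.1 (kv + 1) k (by omega)

lemma der_c9 (h : Clean (n + 1) G) (hkv : kv < n) (hb : G 0 (kv + 1) = some MSym.b)
    (k : ℕ) (h3 : kv + 1 < k) : G 0 k = none := by
  rcases Nat.lt_or_ge k (n + 1) with hk | hk
  · exact (h.2.2 0 k (by omega) hk).1.mpr (Or.inl ⟨kv + 1, by omega, by omega, hb⟩)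
  · exact h.1 0 k (by omega)

end derived
noncomputable def equivCaseB (n kv : ℕ) (hkv : kv < n) :
    {G : CS (n + 1) // G.1 0 (kv + 1) = some MSym.b} ≃ CS kv × CS (n - 1 - kv) where
  toFun G := (⟨innerG kv G.1.1, clean_inner n kv (by omega) G.1.1 G.1.2⟩,
    ⟨outerG kv G.1.1, clean_outer n kv hkv G.1.1 G.1.2⟩)
  invFun P := ⟨⟨consB kv P.1.1 P.2.1,
    clean_consB n kv hkv P.1.1 P.2.1 P.1.2 P.2.2⟩, consB_0k0 kv P.1.1 P.2.1⟩
  left_inv := by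
    rintro ⟨⟨G, hG⟩, hb⟩
    refine Subtype.ext (Subtype.ext (funext fun i => funext fun k => ?_))
    show consB kv (innerG kv G) (outerG kv G) i k = G i k
    rcases Nat.eq_zero_or_pos i with hi0 | hi0
    · subst hi0
      rcases Nat.eq_zero_or_pos k with hk0 | hk0
      · subst hk0
        rw [consB_00]
        exact (der_c1 hG hkv hb).symm
      · rcases Nat.lt_or_ge kv k with h1 | h1
        · rcases Nat.eq_or_lt_of_le (show kv + 1 ≤ k by omega) with h2 | h2
          · rw [← h2, consB_0k0]
            exact hb.symm
          · rw [consB_0big kv _ _ k h2]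
            exact (der_c9 hG hkv hb k h2).symm
        · -- 1 ≤ k ≤ kv
          rw [consB_0mid kv _ _ k hk0 h1]
          have hcond : (∃ i' < k, innerG kv G i' (k - 1) = some MSym.a) ↔
              (∃ i', 0 < i' ∧ i' ≤ k ∧ G i' k = some MSym.a) := by
            constructor
            · rintro ⟨i', hi', ha⟩
              unfold innerG at ha
              rw [if_pos (by omega)] at ha
              refine ⟨i' + 1, by omega, by omega, ?_⟩
              rwa [show k - 1 + 1 = k by omega] at ha
            · rintro ⟨i', hi1, hi2, ha⟩
              refine ⟨i' - 1, by omega, ?_⟩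
              unfold innerG
              rw [if_pos (by omega), show i' - 1 + 1 = i' by omega,
                show k - 1 + 1 = k by omega]
              exact ha
          by_cases hP : ∃ i', 0 < i' ∧ i' ≤ k ∧ G i' k = some MSym.a
          · rw [if_pos (hcond.mpr hP)]
            exact ((der_c6 hG hkv hb k hk0 h1).1.mpr hP).symm
          · rw [if_neg (fun hc' => hP (hcond.mp hc'))]
            exact ((der_c6 hG hkv hb k hk0 h1).2 hP).symm
    · rcases Nat.lt_or_ge kv i with h1 | h1
      · rcases Nat.lt_or_ge (kv + 1) i with h2 | h2
        · -- outer rows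
          rcases Nat.lt_or_ge k (kv + 2) with h3 | h3
          · rw [consB_outlow kv _ _ i k (by omega) h3]
            exact (hG.1 i k (by omega)).symm
          · rw [consB_out kv _ _ i k (by omega) h3]
            show G (i - (kv + 2) + kv + 2) (k - (kv + 2) + kv + 2) = G i k
            congr 1 <;> omega
        · -- i = kv + 1
          rw [show i = kv + 1 by omega]
          rcases Nat.lt_trichotomy k (kv + 1) with h3 | h3 | h3
          · rw [consB_rowk0 kv _ _ k (by omega)]
            exact (hG.1 (kv + 1) k (by omega)).symm
          · rw [h3, consB_diagk0]
            exact (der_c4 hG hkv hb).symm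
          · rw [consB_rowk0 kv _ _ k (by omega)]
            exact (der_c8 hG hkv hb k h3).symm
      · -- 1 ≤ i ≤ kv
        rcases Nat.lt_or_ge kv k with h3 | h3
        · rcases Nat.eq_or_lt_of_le (show kv + 1 ≤ k by omega) with h4 | h4
          · -- k = kv + 1
            rw [← h4, consB_ik0 kv _ _ i hi0 h1]
            have hcond : (∃ j < kv, innerG kv G (i - 1) j = some MSym.b) ↔
                (∃ k', i ≤ k' ∧ k' < kv + 1 ∧ G i k' = some MSym.b) := by
              constructor
              · rintro ⟨j, hj, hbb⟩
                unfold innerG at hbb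
                rw [if_pos hj] at hbb
                rw [show i - 1 + 1 = i by omega] at hbb
                refine ⟨j + 1, ?_, by omega, hbb⟩
                by_contra hc'
                rw [hG.1 i (j + 1) (by omega)] at hbb
                exact nomatch hbb
              · rintro ⟨k', hk1, hk2, hbb⟩
                refine ⟨k' - 1, by omega, ?_⟩
                unfold innerG
                rw [if_pos (by omega), show i - 1 + 1 = i by omega,
                  show k' - 1 + 1 = k' by omega]
                exact hbb
            by_cases hP : ∃ k', i ≤ k' ∧ k' < kv + 1 ∧ G i k' = some MSym.b
            · rw [if_pos (hcond.mpr hP)]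
              exact ((der_c5 hG hkv hb i hi0 h1).1.mpr hP).symm
            · rw [if_neg (fun hc' => hP (hcond.mp hc'))]
              exact ((der_c5 hG hkv hb i hi0 h1).2 hP).symm
          · rw [consB_ibig kv _ _ i k hi0 h1 h4]
            exact (der_c7 hG hkv hb i k hi0 h1 h4).symm
        · -- k ≤ kv
          rcases Nat.eq_zero_or_pos k with hk0 | hk0
          · subst hk0
            rw [consB_i0 kv _ _ i hi0 h1]
            exact (hG.1 i 0 (by omega)).symm
          · rw [consB_mid kv _ _ i k hi0 h1 hk0 h3]
            unfold innerG
            rw [if_pos (by omega)]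
            show G (i - 1 + 1) (k - 1 + 1) = G i k
            congr 1 <;> omega
  right_inv := by
    rintro ⟨⟨Gi, hGi⟩, ⟨Go, hGo⟩⟩
    refine Prod.ext (Subtype.ext (funext fun i => funext fun k => ?_))
      (Subtype.ext (funext fun i => funext fun k => ?_))
    · show innerG kv (consB kv Gi Go) i k = Gi i k
      unfold innerG
      rcases Nat.lt_or_ge k kv with h1 | h1
      · rw [if_pos h1]
        rcases Nat.lt_or_ge i kv with h2 | h2
        · rw [consB_mid kv Gi Go (i + 1) (k + 1) (by omega) (by omega) (by omega) (by omega)]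
          simp
        · rw [hGi.1 i k (by omega)]
          rcases Nat.eq_or_lt_of_le (show kv + 1 ≤ i + 1 by omega) with h3 | h3
          · rw [← h3]
            exact consB_rowk0 kv Gi Go (k + 1) (by omega)
          · exact consB_outlow kv Gi Go (i + 1) (k + 1) (by omega) (by omega)
      · rw [if_neg (by omega)]
        exact (hGi.1 i k (by omega)).symm
    · show outerG kv (consB kv Gi Go) i k = Go i k
      unfold outerG
      rw [consB_out kv Gi Go (i + kv + 2) (k + kv + 2) (by omega) (by omega)]
      congr 1 <;> omega
instance : Fintype MSym where
  elems := {MSym.a, MSym.b, MSym.x}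
  complete := fun x => by cases x <;> simp

noncomputable instance CSFinite (n : ℕ) : Finite (CS n) :=
  Finite.of_equiv _ (equivA n)

noncomputable def NC (n : ℕ) : ℕ := Nat.card (CS n)

instance : Unique (CS 0) where
  default := ⟨fun _ _ => none, fun i k _ => rfl, fun i hi => absurd hi (by omega),
    fun i k _ hk => absurd hk (by omega)⟩
  uniq := fun G => Subtype.ext (funext fun i => funext fun k =>
    G.2.1 i k (Or.inr (Nat.zero_le k)))

lemma NC_zero : NC 0 = 1 := Nat.card_unique

open scoped Classical in
noncomputable def equivBSigma (n : ℕ) :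
    {G : CS (n + 1) // G.1 0 0 = some MSym.a ∧ ∃ k, G.1 0 k = some MSym.b} ≃
      Σ kv : Fin n, {G : CS (n + 1) // G.1 0 (kv.1 + 1) = some MSym.b} := by
  classical
  have hfind : ∀ (x : {G : CS (n + 1) // G.1 0 0 = some MSym.a ∧ ∃ k, G.1 0 k = some MSym.b}),
      0 < Nat.find x.2.2 ∧ Nat.find x.2.2 ≤ n := by
    intro x
    have hspec := Nat.find_spec x.2.2
    constructor
    · rcases Nat.eq_zero_or_pos (Nat.find x.2.2) with h0 | h0
      · rw [h0] at hspec
        rw [x.2.1] at hspec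
        exact absurd hspec (by simp)
      · exact h0
    · by_contra hc
      rw [x.1.2.1 0 _ (by omega)] at hspec
      exact nomatch hspec
  refine (Equiv.sigmaFiberEquiv (fun x => (⟨Nat.find x.2.2 - 1, by
    have := hfind x; omega⟩ : Fin n))).symm.trans (Equiv.sigmaCongrRight fun kv => ?_)
  refine ⟨fun x => ⟨x.1.1, ?_⟩, fun y => ⟨⟨y.1, der_c1 y.1.2 kv.2 y.2, ⟨kv.1 + 1, y.2⟩⟩, ?_⟩,
    fun x => Subtype.ext (Subtype.ext rfl), fun y => Subtype.ext rfl⟩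
  · have hv : Nat.find x.1.2.2 - 1 = (kv : ℕ) := by simpa using congrArg Fin.val x.2
    have := hfind x.1
    have hspec := Nat.find_spec x.1.2.2
    rwa [show Nat.find x.1.2.2 = kv.1 + 1 by omega] at hspec
  · have hspec := Nat.find_spec (⟨kv.1 + 1, y.2⟩ : ∃ k, y.1.1 0 k = some MSym.b)
    have huniq := row0_unique_b (n + 1) y.1.1 y.1.2 hspec y.2
    refine Fin.ext ?_
    show Nat.find (⟨kv.1 + 1, y.2⟩ : ∃ k, y.1.1 0 k = some MSym.b) - 1 = (kv : ℕ)
    omega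

open scoped Classical in
lemma NC_rec (n : ℕ) :
    NC (n + 1) = 2 * NC n + ∑ kv : Fin n, NC kv.1 * NC (n - 1 - kv.1) := by
  classical
  have h1 : NC (n + 1) = Nat.card {G : CS (n + 1) // G.1 0 0 = some MSym.b} +
      Nat.card {G : CS (n + 1) // ¬ G.1 0 0 = some MSym.b} := by
    rw [NC, ← Nat.card_congr (Equiv.sumCompl (fun G : CS (n + 1) => G.1 0 0 = some MSym.b)),
      Nat.card_sum]
  have h2 : Nat.card {G : CS (n + 1) // G.1 0 0 = some MSym.b} = NC n :=
    Nat.card_congr (equivCaseA n)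
  have h3 : Nat.card {G : CS (n + 1) // ¬ G.1 0 0 = some MSym.b} =
      Nat.card {G : CS (n + 1) // G.1 0 0 = some MSym.a} := by
    refine Nat.card_congr (Equiv.subtypeEquivRight fun G => ?_)
    rcases G.2.2.1 0 (by omega) with hh | hh <;> simp [hh]
  have h4 : Nat.card {G : CS (n + 1) // G.1 0 0 = some MSym.a} =
      Nat.card {G : CS (n + 1) // G.1 0 0 = some MSym.a ∧ ∃ k, G.1 0 k = some MSym.b} +
      Nat.card {G : CS (n + 1) // G.1 0 0 = some MSym.a ∧ ¬ ∃ k, G.1 0 k = some MSym.b} := by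
    rw [← Nat.card_congr (Equiv.sumCompl
      (fun x : {G : CS (n + 1) // G.1 0 0 = some MSym.a} => ∃ k, x.1.1 0 k = some MSym.b)),
      Nat.card_sum]
    congr 1
    · exact Nat.card_congr (Equiv.subtypeSubtypeEquivSubtypeInter
        (fun G : CS (n + 1) => G.1 0 0 = some MSym.a)
        (fun G => ∃ k, G.1 0 k = some MSym.b))
    · exact Nat.card_congr ((Equiv.subtypeSubtypeEquivSubtypeInter
        (fun G : CS (n + 1) => G.1 0 0 = some MSym.a)
        (fun G => ¬ ∃ k, G.1 0 k = some MSym.b)).trans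
        (Equiv.subtypeEquivRight (fun G => by tauto)))
  have h5 : Nat.card {G : CS (n + 1) // G.1 0 0 = some MSym.a ∧ ¬ ∃ k, G.1 0 k = some MSym.b} =
      NC n := Nat.card_congr
    (((Equiv.subtypeEquivRight fun G => by simp [not_exists]).trans (equivCaseC n)))
  have h6 : Nat.card {G : CS (n + 1) // G.1 0 0 = some MSym.a ∧ ∃ k, G.1 0 k = some MSym.b} =
      ∑ kv : Fin n, NC kv.1 * NC (n - 1 - kv.1) := by
    rw [Nat.card_congr (equivBSigma n)]
    letI : ∀ kv : Fin n, Fintype {G : CS (n + 1) // G.1 0 (kv.1 + 1) = some MSym.b} :=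
      fun kv => Fintype.ofFinite _
    rw [Nat.card_eq_fintype_card, Fintype.card_sigma]
    refine Finset.sum_congr rfl fun kv _ => ?_
    rw [← Nat.card_eq_fintype_card, Nat.card_congr (equivCaseB n kv.1 kv.2), Nat.card_prod]
    rfl
  omega

lemma NC_catalan (n : ℕ) : NC n = catalan (n + 1) := by
  induction n using Nat.strong_induction_on with
  | _ n ih =>
    cases n with
    | zero => rw [NC_zero, catalan_one]
    | succ m =>
      rw [NC_rec m]
      have hterm : ∀ kv : Fin m, NC kv.1 * NC (m - 1 - kv.1) =
          catalan (kv.1 + 1) * catalan (m - kv.1) := by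
        intro kv
        rw [ih kv.1 (by omega), ih (m - 1 - kv.1) (by omega)]
        congr 2
        omega
      rw [Finset.sum_congr rfl (fun kv _ => hterm kv), ih m (by omega), catalan_succ (m + 1),
        Fin.sum_univ_eq_sum_range (fun i => catalan i * catalan (m + 1 - i)) (m + 2),
        Finset.sum_range_succ, Finset.sum_range_succ',
        Fin.sum_univ_eq_sum_range (fun i => catalan (i + 1) * catalan (m - i)) m]
      have h2 : ∀ i ∈ Finset.range m, catalan (i + 1) * catalan (m + 1 - (i + 1)) =
          catalan (i + 1) * catalan (m - i) := by
        intro i hi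
        congr 2
        omega
      rw [Finset.sum_congr rfl h2]
      simp [catalan_zero]
      ring
/-- The number of multi-Catalan tableaux of size `n` with no x on the diagonal is
the Catalan number C_{n+1} = (1/(n+2)) * binom(2n+2, n+1). -/
theorem multiCatalan_count_no_A (n : ℕ) :
    (Nat.card {F : Fin n → Fin n → Option MSym //
        IsMCT n F ∧ (typeWord n F).count Letter.A = 0} : ℚ) =
      1 / (n + 2) * Nat.choose (2 * n + 2) (n + 1) := by
  have h0 : Nat.card {F : Fin n → Fin n → Option MSym //
      IsMCT n F ∧ (typeWord n F).count Letter.A = 0} = catalan (n + 1) := by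
    rw [Nat.card_congr (equivA n)]
    exact NC_catalan n
  rw [h0]
  have h1 := succ_mul_catalan_eq_centralBinom (n + 1)
  have h2 : Nat.centralBinom (n + 1) = Nat.choose (2 * n + 2) (n + 1) := by
    rw [Nat.centralBinom]
    congr 1
  have h3 : ((n + 2) * catalan (n + 1) : ℕ) = Nat.choose (2 * n + 2) (n + 1) := by
    rw [← h2]
    exact_mod_cast h1
  have hne : ((n : ℚ) + 2) ≠ 0 := by positivity
  rw [one_div, inv_mul_eq_div, eq_div_iff hne]
  have h4 : (catalan (n + 1) * (n + 2) : ℕ) = Nat.choose (2 * n + 2) (n + 1) := by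
    rw [mul_comm]
    exact h3
  exact_mod_cast h4
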